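/- With the protocol and function f from the previous context: a 1a transition (1a→3b) applied to a configuration C with c = 0 preserves f exactly, i.e., f(C') = f(C), and in general f(C') ≤ f(C) with equality if and only if c = 0. -/
import Mathlib

/-- A configuration of the doubling protocol on states `{1,2,3,4,a,b,c,d}`,
recorded as counts of agents in each state. -/
structure Conf where
  n1 : ℕ
  n2 : ℕ
  n3 : ℕ
  n4 : ℕ
  a : ℕ
  b : ℕ
  c : ℕ
  d : ℕ

/-- One step of the protocol with transitions
`1c→2d, 2b→1d, 1a→3b, 3d→4c, 4b→3c, 3a→1b` (all other interactions are no-ops,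
which do not change the count vector). -/
def DStep (C C' : Conf) : Prop :=
  (1 ≤ C.n1 ∧ 1 ≤ C.c ∧ C' = ⟨C.n1 - 1, C.n2 + 1, C.n3, C.n4, C.a, C.b, C.c - 1, C.d + 1⟩) ∨
  (1 ≤ C.n2 ∧ 1 ≤ C.b ∧ C' = ⟨C.n1 + 1, C.n2 - 1, C.n3, C.n4, C.a, C.b - 1, C.c, C.d + 1⟩) ∨
  (1 ≤ C.n1 ∧ 1 ≤ C.a ∧ C' = ⟨C.n1 - 1, C.n2, C.n3 + 1, C.n4, C.a - 1, C.b + 1, C.c, C.d⟩) ∨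
  (1 ≤ C.n3 ∧ 1 ≤ C.d ∧ C' = ⟨C.n1, C.n2, C.n3 - 1, C.n4 + 1, C.a, C.b, C.c + 1, C.d - 1⟩) ∨
  (1 ≤ C.n4 ∧ 1 ≤ C.b ∧ C' = ⟨C.n1, C.n2, C.n3 + 1, C.n4 - 1, C.a, C.b - 1, C.c + 1, C.d⟩) ∨
  (1 ≤ C.n3 ∧ 1 ≤ C.a ∧ C' = ⟨C.n1 + 1, C.n2, C.n3 - 1, C.n4, C.a - 1, C.b + 1, C.c, C.d⟩)

/-- `C` has exactly one agent in a numbered state. -/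
def OneNumbered (C : Conf) : Prop :=
  C.n1 + C.n2 + C.n3 + C.n4 = 1

/-- The potential function `f` (meaningful when `C` has exactly one numbered agent). -/
def fPot (C : Conf) : ℕ :=
  if C.n1 = 1 then 2 ^ C.a * (2 * C.c + C.d)
  else if C.n2 = 1 then 2 ^ C.a * (2 * C.c + C.d + 1)
  else if C.n3 = 1 then 2 ^ C.a * (2 * C.d + C.c)
  else 2 ^ C.a * (2 * C.d + C.c + 1)

/-- A `1a→3b` transition does not increase `f`, with equality iff `c = 0`. -/
theorem fPot_1a (C C' : Conf) (h1 : OneNumbered C)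
    (hstep : 1 ≤ C.n1 ∧ 1 ≤ C.a ∧
      C' = ⟨C.n1 - 1, C.n2, C.n3 + 1, C.n4, C.a - 1, C.b + 1, C.c, C.d⟩) :
    fPot C' ≤ fPot C ∧ (fPot C' = fPot C ↔ C.c = 0) := by
  obtain ⟨hn1, ha, hC'⟩ := hstep
  have h1' : C.n1 = 1 ∧ C.n2 = 0 ∧ C.n3 = 0 ∧ C.n4 = 0 := by
    unfold OneNumbered at h1; omega
  obtain ⟨e1, e2, e3, e4⟩ := h1'
  subst hC'
  simp only [fPot, e1, e2, e3, e4]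
  norm_num
  obtain ⟨k, hk⟩ : ∃ k, C.a = k + 1 := ⟨C.a - 1, by omega⟩
  rw [hk]
  simp [pow_succ]
  constructor
  · nlinarith [Nat.one_le_two_pow (n := k)]
  · constructor
    · intro h; nlinarith [Nat.one_le_two_pow (n := k)]
    · intro h; rw [h]; ring
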